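/- Let □mod6 := {n ∈ ℕ, n ≥ 1 | ∃ x ≥ 1 with x² ≡ n (mod 6)} be the set of positive integers that are congruent to a square modulo 6. Then M(□mod6) = {1, 3, 4, 6, 7, 9, 22, 25, 28, 52, 55, 58, 82, 85, 88}. -/

import Mathlib

/-- `Subseq x y` means the decimal digit string of `x` is a subsequence of that of `y`. -/
def Subseq (x y : ℕ) : Prop := (Nat.digits 10 x).Sublist (Nat.digits 10 y)

/-- The minimal set of `S`: elements of `S` containing no smaller element of `S`
as a subsequence of their decimal digits. -/
def minimalSet (S : Set ℕ) : Set ℕ := {s ∈ S | ¬ ∃ n ∈ S, n < s ∧ Subseq n s}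

lemma memS (n : ℕ) : (1 ≤ n ∧ ∃ x : ℕ, 1 ≤ x ∧ x ^ 2 ≡ n [MOD 6]) ↔ (1 ≤ n ∧ n % 6 ≠ 2 ∧ n % 6 ≠ 5) := by
  constructor
  · rintro ⟨h1, x, hx, hmod⟩
    refine ⟨h1, ?_, ?_⟩ <;>
    · have h : x ^ 2 % 6 = n % 6 := hmod
      rw [Nat.pow_mod] at h
      have h6 : x % 6 < 6 := Nat.mod_lt _ (by norm_num)
      interval_cases h' : x % 6 <;> omega
  · rintro ⟨h1, h2, h5⟩
    refine ⟨h1, ?_⟩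
    have h6 : n % 6 < 6 := Nat.mod_lt _ (by norm_num)
    have : n % 6 = 0 ∨ n % 6 = 1 ∨ n % 6 = 3 ∨ n % 6 = 4 := by omega
    rcases this with h | h | h | h
    · exact ⟨6, by norm_num, by unfold Nat.ModEq; omega⟩
    · exact ⟨1, by norm_num, by unfold Nat.ModEq; omega⟩
    · exact ⟨3, by norm_num, by unfold Nat.ModEq; omega⟩
    · exact ⟨2, by norm_num, by unfold Nat.ModEq; omega⟩

lemma digits_single (d : ℕ) (h1 : 1 ≤ d) (h9 : d < 10) : Nat.digits 10 d = [d] := by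
  rw [Nat.digits_def' (by norm_num : 1 < 10) (by omega)]
  rw [Nat.mod_eq_of_lt h9, Nat.div_eq_of_lt h9]
  simp

lemma digits_two (n : ℕ) (h1 : 10 ≤ n) (h2 : n < 100) : Nat.digits 10 n = [n % 10, n / 10] := by
  rw [Nat.digits_def' (by norm_num : 1 < 10) (by omega),
      Nat.digits_def' (by norm_num : 1 < 10) (by omega)]
  have h3 : n / 10 / 10 = 0 := by omega
  rw [Nat.mod_eq_of_lt (by omega : n / 10 < 10), h3]
  simp

lemma no_sub_single (d : ℕ) (h1 : 1 ≤ d) (h9 : d < 10) :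
    ¬ ∃ m, (1 ≤ m ∧ m % 6 ≠ 2 ∧ m % 6 ≠ 5) ∧ m < d ∧ (Nat.digits 10 m).Sublist (Nat.digits 10 d) := by
  rintro ⟨m, ⟨hm1, hm2, hm3⟩, hlt, hsub⟩
  rw [digits_single d h1 h9] at hsub
  have hm : m = Nat.ofDigits 10 (Nat.digits 10 m) := (Nat.ofDigits_digits 10 m).symm
  rcases List.sublist_singleton.mp hsub with h | h <;> rw [h] at hm <;>
    simp [Nat.ofDigits] at hm <;> omega

lemma no_sub_two (n a b : ℕ) (ha : a = 2 ∨ a = 5 ∨ a = 8) (hb : b = 2 ∨ b = 5 ∨ b = 8)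
    (hn : n = 10 * b + a) (hd : Nat.digits 10 n = [a, b]) :
    ¬ ∃ m, (1 ≤ m ∧ m % 6 ≠ 2 ∧ m % 6 ≠ 5) ∧ m < n ∧ (Nat.digits 10 m).Sublist (Nat.digits 10 n) := by
  rintro ⟨m, ⟨hm1, hm2, hm3⟩, hlt, hsub⟩
  rw [hd] at hsub
  have hmem := List.mem_sublists.2 hsub
  have hm : m = Nat.ofDigits 10 (Nat.digits 10 m) := (Nat.ofDigits_digits 10 m).symm
  simp [List.sublists] at hmem
  rcases hmem with h | h | h | h <;> rw [h] at hm <;> simp [Nat.ofDigits] at hm <;> omega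

lemma sum_filter_ne_zero (l : List ℕ) : (l.filter (fun d => d ≠ 0)).sum = l.sum := by
  induction l with
  | nil => simp
  | cons a t ih =>
    by_cases h : a = 0 <;> simp only [List.filter_cons, h, List.sum_cons] <;>
      simp_all

set_option maxHeartbeats 1000000 in
theorem minimalSet_squares_mod_six :
    minimalSet {n : ℕ | 1 ≤ n ∧ ∃ x : ℕ, 1 ≤ x ∧ x ^ 2 ≡ n [MOD 6]} =
      {1, 3, 4, 6, 7, 9, 22, 25, 28, 52, 55, 58, 82, 85, 88} := by
  ext n
  simp only [minimalSet, Set.mem_setOf_eq, Set.mem_insert_iff, Set.mem_singleton_iff, Subseq, memS]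
  constructor
  · rintro ⟨⟨h1, h2, h5⟩, hmin⟩
    by_contra hn
    push_neg at hn
    obtain ⟨e1, e3, e4, e6, e7, e9, e22, e25, e28, e52, e55, e58, e82, e85, e88⟩ := hn
    by_cases hd : ∃ d ∈ Nat.digits 10 n, d = 1 ∨ d = 3 ∨ d = 4 ∨ d = 6 ∨ d = 7 ∨ d = 9
    · obtain ⟨d, hdmem, hdval⟩ := hd
      by_cases h10 : n < 10
      · rw [digits_single n h1 h10] at hdmem
        simp at hdmem
        omega
      · apply hmin
        refine ⟨d, ⟨by omega, by omega, by omega⟩, by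
          have := Nat.digits_lt_base (by norm_num) hdmem; omega, ?_⟩
        rw [digits_single d (by omega) (Nat.digits_lt_base (by norm_num) hdmem)]
        exact List.singleton_sublist.mpr hdmem
    · push_neg at hd
      set L := Nat.digits 10 n with hL
      have hall : ∀ d ∈ L, d = 0 ∨ d = 2 ∨ d = 5 ∨ d = 8 := by
        intro d hdL
        have h10 := Nat.digits_lt_base (by norm_num) hdL
        have := hd d hdL
        omega
      have hFsub : (L.filter (fun d => d ≠ 0)).Sublist L := List.filter_sublist
      have hFmem : ∀ d ∈ L.filter (fun d => d ≠ 0), d = 2 ∨ d = 5 ∨ d = 8 := by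
        intro d hdF
        have hdL := hFsub.subset hdF
        have hne : d ≠ 0 := by simpa using List.of_mem_filter hdF
        have := hall d hdL
        omega
      have hne : L.filter (fun d => d ≠ 0) ≠ [] := by
        intro hemp
        have hnnil : L ≠ [] := by
          rw [hL]
          exact Nat.digits_ne_nil_iff_ne_zero.mpr (by omega)
        have hlast := Nat.getLast_digit_ne_zero 10 (show n ≠ 0 by omega)
        have hmemlast : L.getLast hnnil ∈ L := List.getLast_mem hnnil
        have : L.getLast hnnil ∈ L.filter (fun d => d ≠ 0) := by
          rw [List.mem_filter]
          exact ⟨hmemlast, by simpa using hlast⟩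
        rw [hemp] at this
        simp at this
      have hmod3 : n % 3 = L.sum % 3 := Nat.modEq_digits_sum 3 10 (by norm_num) n
      have hmod36 : n % 6 % 3 = n % 3 := Nat.mod_mod_of_dvd n (by norm_num)
      rcases hFeq : L.filter (fun d => d ≠ 0) with _ | ⟨a, _ | ⟨b, t⟩⟩
      · exact hne hFeq
      · -- exactly one nonzero digit
        have hsum : L.sum = a := by
          rw [← sum_filter_ne_zero L, hFeq]; simp
        have ha := hFmem a (by rw [hFeq]; simp)
        have h6 : n % 6 < 6 := Nat.mod_lt _ (by norm_num)
        omega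
      · -- at least two nonzero digits
        have ha := hFmem a (by rw [hFeq]; simp)
        have hb := hFmem b (by rw [hFeq]; simp)
        have hsub2 : [a, b].Sublist L := by
          have h1' : [a, b].Sublist (a :: b :: t) := ((List.nil_sublist t).cons₂ b).cons₂ a
          have h2' := hFsub
          rw [hFeq] at h2'
          exact h1'.trans h2'
        by_cases h100 : n < 100
        · -- then L = [n%10, n/10], and F = L forces n to be one of the 9 two-digit numbers
          have h10 : 10 ≤ n := by
            by_contra hlt10
            have hsing : L = [n] := by rw [hL]; exact digits_single n h1 (by omega)
            have hlen := hsub2.length_le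
            rw [hsing] at hlen
            simp at hlen
          have hLeq : L = [n % 10, n / 10] := by rw [hL]; exact digits_two n h10 h100
          have hFeqL : L.filter (fun d => d ≠ 0) = L := by
            apply hFsub.eq_of_length_le
            have hl2 : L.length = 2 := by rw [hLeq]; rfl
            rw [hl2, hFeq]
            simp
          rw [hFeq, hLeq] at hFeqL
          have han : a = n % 10 := by injection hFeqL
          have hbn : b = n / 10 := by
            injection hFeqL with _ h'
            injection h'
          omega
        · -- n ≥ 100: witness 10*b + a
          apply hmin
          refine ⟨10 * b + a, ⟨by omega, by omega, by omega⟩, by omega, ?_⟩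
          have hdig : Nat.digits 10 (10 * b + a) = [a, b] := by
            rcases ha with rfl | rfl | rfl <;> rcases hb with rfl | rfl | rfl <;> norm_num
          rw [hdig]
          exact hsub2
  · rintro (rfl | rfl | rfl | rfl | rfl | rfl | rfl | rfl | rfl | rfl | rfl | rfl | rfl | rfl | rfl) <;>
      refine ⟨⟨by norm_num, by norm_num, by norm_num⟩, ?_⟩
    · exact no_sub_single 1 (by norm_num) (by norm_num)
    · exact no_sub_single 3 (by norm_num) (by norm_num)
    · exact no_sub_single 4 (by norm_num) (by norm_num)
    · exact no_sub_single 6 (by norm_num) (by norm_num)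
    · exact no_sub_single 7 (by norm_num) (by norm_num)
    · exact no_sub_single 9 (by norm_num) (by norm_num)
    · exact no_sub_two 22 2 2 (by norm_num) (by norm_num) (by norm_num) (by norm_num)
    · exact no_sub_two 25 5 2 (by norm_num) (by norm_num) (by norm_num) (by norm_num)
    · exact no_sub_two 28 8 2 (by norm_num) (by norm_num) (by norm_num) (by norm_num)
    · exact no_sub_two 52 2 5 (by norm_num) (by norm_num) (by norm_num) (by norm_num)
    · exact no_sub_two 55 5 5 (by norm_num) (by norm_num) (by norm_num) (by norm_num)
    · exact no_sub_two 58 8 5 (by norm_num) (by norm_num) (by norm_num) (by norm_num)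
    · exact no_sub_two 82 2 8 (by norm_num) (by norm_num) (by norm_num) (by norm_num)
    · exact no_sub_two 85 5 8 (by norm_num) (by norm_num) (by norm_num) (by norm_num)
    · exact no_sub_two 88 8 8 (by norm_num) (by norm_num) (by norm_num) (by norm_num)
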